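/- Let m ≥ 1 be an integer and let μ be a shift-invariant probability measure on ({0,1})^ℤ. Write ρ = P(1) for the probability that a given site is occupied. Then Σ_{k=1}^{m−1} k·P(1 0^k 1) + m·P(1 0^m) = 1 − ρ − P(0^{m+1}), where 0^k denotes the word consisting of k zeros. (In particular, in the deterministic Fukui–Ishibashi traffic model with maximum speed m, the average flow at time t equals 1 − ρ − P_t(0^{m+1}).) -/

import Mathlib

open MeasureTheory

/-- Probability of the cylinder set determined by the word `w` (read starting at
position `1`, which is irrelevant by shift-invariance). -/
noncomputable def wordProb (μ : Measure (ℤ → Bool)) (w : List Bool) : ℝ :=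
  (μ {s | ∀ k : Fin w.length, s ((k : ℕ) : ℤ) = w.get k}).toReal

/-- The cylinder set determined by the word `w`. -/
def cylSet (w : List Bool) : Set (ℤ → Bool) :=
  {s | ∀ k : Fin w.length, s ((k : ℕ) : ℤ) = w.get k}

lemma wordProb_def (μ : Measure (ℤ → Bool)) (w : List Bool) :
    wordProb μ w = (μ (cylSet w)).toReal := rfl

lemma cylSet_measurable (w : List Bool) : MeasurableSet (cylSet w) := by
  have : cylSet w = ⋂ k : Fin w.length, (fun s : ℤ → Bool => s ((k : ℕ) : ℤ)) ⁻¹' {w.get k} := by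
    ext s; simp [cylSet]
  rw [this]
  exact MeasurableSet.iInter fun k => (measurable_pi_apply _) (measurableSet_singleton _)

lemma mem_cyl_append (w : List Bool) (b : Bool) (s : ℤ → Bool) :
    s ∈ cylSet (w ++ [b]) ↔ s ∈ cylSet w ∧ s ((w.length : ℕ) : ℤ) = b := by
  constructor
  · intro h
    refine ⟨fun k => ?_, ?_⟩
    · have := h ⟨k, by simp⟩
      simpa [List.getElem_append_left k.isLt] using this
    · have := h ⟨w.length, by simp⟩
      simpa using this
  · rintro ⟨h1, h2⟩ ⟨k, hk⟩
    rcases lt_or_eq_of_le (Nat.lt_succ_iff.mp (by simpa using hk)) with hlt | heq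
    · have := h1 ⟨k, hlt⟩
      simpa [List.getElem_append_left hlt] using this
    · subst heq
      simpa using h2

lemma mem_cyl_cons (b : Bool) (w : List Bool) (s : ℤ → Bool) :
    s ∈ cylSet (b :: w) ↔ s 0 = b ∧ ∀ k : Fin w.length, s ((k : ℕ) + 1 : ℤ) = w.get k := by
  constructor
  · intro h
    refine ⟨by simpa using h ⟨0, Nat.succ_pos _⟩, fun k => ?_⟩
    have := h ⟨k + 1, Nat.succ_lt_succ k.isLt⟩
    simpa [Int.natCast_succ] using this
  · rintro ⟨h0, h1⟩ ⟨k, hk⟩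
    cases k with
    | zero => simpa using h0
    | succ n =>
      have := h1 ⟨n, Nat.lt_of_succ_lt_succ hk⟩
      simpa [Int.natCast_succ] using this

lemma prob_right (μ : Measure (ℤ → Bool)) [IsProbabilityMeasure μ] (w : List Bool) :
    wordProb μ w = wordProb μ (w ++ [false]) + wordProb μ (w ++ [true]) := by
  have hU : cylSet w = cylSet (w ++ [false]) ∪ cylSet (w ++ [true]) := by
    ext s
    simp only [Set.mem_union, mem_cyl_append]
    cases h : s ((w.length : ℕ) : ℤ) <;> tauto
  have hD : Disjoint (cylSet (w ++ [false])) (cylSet (w ++ [true])) := by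
    rw [Set.disjoint_left]
    intro s h1 h2
    rw [mem_cyl_append] at h1 h2
    simp [h1.2] at h2
  rw [wordProb_def, wordProb_def, wordProb_def, hU,
    measure_union hD (cylSet_measurable _),
    ENNReal.toReal_add (measure_ne_top _ _) (measure_ne_top _ _)]

lemma prob_left (μ : Measure (ℤ → Bool)) [IsProbabilityMeasure μ]
    (hshift : μ.map (fun s (i : ℤ) => s (i + 1)) = μ) (w : List Bool) :
    wordProb μ w = wordProb μ (false :: w) + wordProb μ (true :: w) := by
  have hT : Measurable (fun (s : ℤ → Bool) (i : ℤ) => s (i + 1)) :=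
    measurable_pi_lambda _ fun i => measurable_pi_apply _
  have hpre : μ (cylSet w) = μ ((fun (s : ℤ → Bool) (i : ℤ) => s (i + 1)) ⁻¹' cylSet w) := by
    conv_lhs => rw [← hshift]
    rw [Measure.map_apply hT (cylSet_measurable w)]
  have hU : (fun (s : ℤ → Bool) (i : ℤ) => s (i + 1)) ⁻¹' cylSet w
      = cylSet (false :: w) ∪ cylSet (true :: w) := by
    ext s
    simp only [Set.mem_union, mem_cyl_cons, Set.mem_preimage]
    constructor
    · intro h
      have h' : ∀ k : Fin w.length, s ((k : ℕ) + 1 : ℤ) = w.get k := fun k => h k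
      cases h0 : s 0 <;> tauto
    · rintro (⟨_, h⟩ | ⟨_, h⟩) <;> exact fun k => h k
  have hD : Disjoint (cylSet (false :: w)) (cylSet (true :: w)) := by
    rw [Set.disjoint_left]
    intro s h1 h2
    rw [mem_cyl_cons] at h1 h2
    exact absurd (h1.1 ▸ h2.1) (by simp [h1.1])
  rw [wordProb_def, wordProb_def, wordProb_def, hpre, hU,
    measure_union hD (cylSet_measurable _),
    ENNReal.toReal_add (measure_ne_top _ _) (measure_ne_top _ _)]

lemma abel_sum (q : ℕ → ℝ) (m : ℕ) :
    (∑ k ∈ Finset.Icc 1 (m - 1), (k : ℝ) * (q k - q (k + 1))) + (m : ℝ) * q m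
      = ∑ k ∈ Finset.Icc 1 m, q k := by
  induction m with
  | zero => simp
  | succ n ih =>
    rcases Nat.eq_zero_or_pos n with rfl | hn
    · simp
    · have h1 : n - 1 + 1 = n := Nat.succ_pred_eq_of_pos hn
      rw [Finset.sum_Icc_succ_top (by omega : 1 ≤ n + 1)]
      have h2 : ∑ k ∈ Finset.Icc 1 (n + 1 - 1), (k : ℝ) * (q k - q (k + 1))
          = (∑ k ∈ Finset.Icc 1 (n - 1), (k : ℝ) * (q k - q (k + 1)))
            + (n : ℝ) * (q n - q (n + 1)) := by
        have : n + 1 - 1 = (n - 1) + 1 := by omega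
        rw [this, Finset.sum_Icc_succ_top (by omega : 1 ≤ n - 1 + 1), h1]
      rw [h2, ← ih]
      push_cast
      ring

lemma telescope (p : ℕ → ℝ) (m : ℕ) :
    ∑ k ∈ Finset.Icc 1 m, (p k - p (k + 1)) = p 1 - p (m + 1) := by
  induction m with
  | zero => simp
  | succ n ih => rw [Finset.sum_Icc_succ_top (by omega : 1 ≤ n + 1), ih]; ring

/-- For any shift-invariant probability measure on `{0,1}^ℤ`,
`Σ_{k=1}^{m-1} k·P(1 0^k 1) + m·P(1 0^m) = 1 − ρ − P(0^{m+1})`,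
where `ρ = P(1)`. -/
theorem flow_eq_one_sub_rho_sub_block (m : ℕ) (hm : 1 ≤ m)
    (μ : Measure (ℤ → Bool)) [IsProbabilityMeasure μ]
    (hshift : μ.map (fun s (i : ℤ) => s (i + 1)) = μ)
    (ρ : ℝ) (hρ : ρ = wordProb μ [true]) :
    (∑ k ∈ Finset.Icc 1 (m - 1),
        (k : ℝ) * wordProb μ ([true] ++ List.replicate k false ++ [true]))
      + (m : ℝ) * wordProb μ ([true] ++ List.replicate m false)
    = 1 - ρ - wordProb μ (List.replicate (m + 1) false) := by
  set p : ℕ → ℝ := fun k => wordProb μ (List.replicate k false) with hp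
  set q : ℕ → ℝ := fun k => wordProb μ (List.replicate k false ++ [true]) with hq
  -- right extension: p k = p (k+1) + q k
  have hpq : ∀ k, p k = p (k + 1) + q k := by
    intro k
    have := prob_right μ (List.replicate k false)
    rwa [← List.replicate_succ' (n := k)] at this
  -- left extension for q: q k = q (k+1) + P(1 0^k 1)
  have hql : ∀ k, wordProb μ (true :: (List.replicate k false ++ [true]))
      = q k - q (k + 1) := by
    intro k
    have := prob_left μ hshift (List.replicate k false ++ [true])
    have hrepl : false :: (List.replicate k false ++ [true])
        = List.replicate (k + 1) false ++ [true] := by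
      rw [List.replicate_succ]; rfl
    rw [hrepl] at this
    simp only [hq] at this ⊢
    linarith
  -- left extension for p at m: P(1 0^m) = p m - p (m+1)
  have hpl : wordProb μ (true :: List.replicate m false) = p m - p (m + 1) := by
    have := prob_left μ hshift (List.replicate m false)
    have hrepl : false :: List.replicate m false = List.replicate (m + 1) false := by
      rw [List.replicate_succ]
    rw [hrepl] at this
    simp only [hp] at this ⊢
    linarith
  -- P(1 0^m) = q m as well (both equal p m - p (m+1))
  have hqm : q m = p m - p (m + 1) := by have := hpq m; linarith
  -- total mass: 1 = p 1 + ρ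
  have hone : (1 : ℝ) = p 1 + ρ := by
    have h0 := prob_right μ ([] : List Bool)
    have hnil : wordProb μ ([] : List Bool) = 1 := by
      rw [wordProb_def]
      have : cylSet ([] : List Bool) = Set.univ := by
        ext s; simp [cylSet]
      rw [this]
      simp
    simp only [List.nil_append] at h0
    rw [hnil] at h0
    have : wordProb μ [false] = p 1 := by
      simp only [hp, List.replicate_one]
    rw [hρ, ← this]
    linarith
  -- rewrite the words in the goal
  have hword : ∀ k, [true] ++ List.replicate k false ++ [true]
      = true :: (List.replicate k false ++ [true]) := by
    intro k; simp
  have hword2 : [true] ++ List.replicate m false = true :: List.replicate m false := by simp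
  calc (∑ k ∈ Finset.Icc 1 (m - 1),
          (k : ℝ) * wordProb μ ([true] ++ List.replicate k false ++ [true]))
        + (m : ℝ) * wordProb μ ([true] ++ List.replicate m false)
      = (∑ k ∈ Finset.Icc 1 (m - 1), (k : ℝ) * (q k - q (k + 1))) + (m : ℝ) * q m := by
        rw [hword2, hpl, ← hqm]
        congr 1
        refine Finset.sum_congr rfl fun k _ => ?_
        rw [hword k, hql k]
    _ = ∑ k ∈ Finset.Icc 1 m, q k := abel_sum q m
    _ = ∑ k ∈ Finset.Icc 1 m, (p k - p (k + 1)) := by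
        refine Finset.sum_congr rfl fun k _ => ?_
        have := hpq k; linarith
    _ = p 1 - p (m + 1) := telescope p m
    _ = 1 - ρ - wordProb μ (List.replicate (m + 1) false) := by
        simp only [hp]; linarith [hone]
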